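/- Let (F^{α,a})_{a≥0} be formal power series satisfying the equations (TRR) and (REL). Then for all a,b,c ≥ 0: ∂²F^{α,a}/∂q^β_{b+1}∂q^γ_c = (∂F^{μ,0}/∂q^β_b)(∂²F^{α,a}/∂q^μ_0∂q^γ_c) and ∂²F^{α,a+1}/∂q^β_b∂q^γ_c = (∂F^{α,a}/∂q^μ_0)(∂²F^{μ,0}/∂q^β_b∂q^γ_c). -/

import Mathlib

/-!
Common setup: formal power series in the variables `t^β_b` (β ∈ Fin N, b ∈ ℕ),
the descendant/ancestor vector potential equations of a (calibrated) flat F-manifold,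
and the generalized Givental upper/lower triangular group actions, following
Arsie–Buryak–Lorenzoni–Rossi, "Semisimple flat F-manifolds in higher genus".
-/

noncomputable section
open MvPowerSeries

/-- Index of the variable `t^β_b`. -/
abbrev Idx (N : ℕ) := Fin N × ℕ

/-- The ring of formal power series in the variables `t^β_b`. -/
abbrev PS (N : ℕ) := MvPowerSeries (Idx N) ℂ

variable {N : ℕ}

/-- Build a power series from its coefficient function. -/
def ofCoeff (f : (Idx N →₀ ℕ) → ℂ) : PS N := f

/-- The coefficient of a power series at a monomial. -/
def cf (m : Idx N →₀ ℕ) (F : PS N) : ℂ := MvPowerSeries.coeff (R := ℂ) m F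

/-- The partial derivative `∂/∂t^β_b` (= `∂/∂q^β_b`) of a formal power series. -/
def pd (v : Idx N) (F : PS N) : PS N :=
  ofCoeff fun m => ((m v + 1 : ℕ) : ℂ) * cf (m + Finsupp.single v 1) F

/-- The series `q^β_b = t^β_b − A^β δ_{b,1}`, for series centered at the point `p`
(i.e. written in the variables `X_{(β,b)} = t^β_b − p^β δ_{b,0}`):
`q^β_b = X_{(β,b)} + p^β δ_{b,0} − A^β δ_{b,1}`. -/
def qs (p A : Fin N → ℂ) (v : Idx N) : PS N :=
  X v + C (σ := Idx N) (R := ℂ) ((if v.2 = 0 then p v.1 else 0) - (if v.2 = 1 then A v.1 else 0))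

/-- Coefficientwise well-defined infinite sum `Σ_{β, b ≥ 0} X_{(β,b+1)} · G (β,b)`
(used in the string equation). -/
def stringX (G : Idx N → PS N) : PS N :=
  ofCoeff fun m =>
    ∑ v ∈ m.support.filter (fun v => 1 ≤ v.2),
      cf (m - Finsupp.single v 1) (G (v.1, v.2 - 1))

/-- Coefficientwise well-defined infinite sum `Σ_{β, b ≥ 0} X_{(β,b)} · G (β,b)`
(used in the dilaton equation). -/
def dilX (G : Idx N → PS N) : PS N :=
  ofCoeff fun m => ∑ v ∈ m.support, cf (m - Finsupp.single v 1) (G v)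

/-- `(−1)^k` as a complex number. -/
def sg (k : ℕ) : ℂ := if Even k then 1 else -1

/-- `(−1)^d` for an integer `d`. -/
def sgZ (d : ℤ) : ℂ := if Even d then 1 else -1

/-- The extension of the collection `F^{α,a}` to all `a ∈ ℤ` by the convention
`F^{α,a} := (−1)^{a+1} q^α_{−a−1}` for `a < 0`. -/
def FZ (p A : Fin N → ℂ) (F : ℕ → Fin N → PS N) (a : ℤ) (α : Fin N) : PS N :=
  if 0 ≤ a then F a.toNat α
  else C (σ := Idx N) (R := ℂ) (if Even a then -1 else 1) * qs p A (α, (-a - 1).toNat)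

/-- The descendant vector potential equations (string, dilaton, TRR, REL) for a collection
`F^{α,a}` of formal power series centered at `p`, with unit `A`.  All infinite sums over
`b ≥ 0` are the coefficientwise (well-defined) ones. -/
def IsDescendant (p A : Fin N → ℂ) (F : ℕ → Fin N → PS N) : Prop :=
  -- string equation: Σ_{b≥0} q^β_{b+1} ∂F^{α,a}/∂q^β_b = −F^{α,a−1}
  (∀ (a : ℤ) (α : Fin N),
      stringX (fun v => pd v (FZ p A F a α))
        - ∑ β, C (σ := Idx N) (R := ℂ) (A β) * pd (β, 0) (FZ p A F a α)
      = - FZ p A F (a - 1) α) ∧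
  -- dilaton equation: Σ_{b≥0} q^β_b ∂F^{α,a}/∂q^β_b = F^{α,a}
  (∀ (a : ℤ) (α : Fin N),
      dilX (fun v => pd v (FZ p A F a α))
        + ∑ β, C (σ := Idx N) (R := ℂ) (p β) * pd (β, 0) (FZ p A F a α)
        - ∑ β, C (σ := Idx N) (R := ℂ) (A β) * pd (β, 1) (FZ p A F a α)
      = FZ p A F a α) ∧
  -- topological recursion relation
  (∀ (b c : ℕ) (α β γ : Fin N),
      pd (β, b + 1) (pd (γ, c) (F 0 α))
      = ∑ μ, pd (β, b) (F 0 μ) * pd (μ, 0) (pd (γ, c) (F 0 α))) ∧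
  -- the relation controlling descendants
  (∀ (a b : ℕ) (α β : Fin N),
      pd (β, b) (F (a + 1) α) + pd (β, b + 1) (F a α)
      = ∑ μ, pd (μ, 0) (F a α) * pd (β, b) (F 0 μ))

/-- A collection of ancestor vector potentials: descendant vector potentials centered at `0`
all of whose first partial derivatives vanish at `t^*_* = 0`. -/
def IsAncestor (A : Fin N → ℂ) (F : ℕ → Fin N → PS N) : Prop :=
  IsDescendant 0 A F ∧
  ∀ (a : ℕ) (α : Fin N) (v : Idx N),
    MvPowerSeries.constantCoeff (σ := Idx N) (R := ℂ) (pd v (F a α)) = 0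

/-- The monomial substitution: for a monomial `m`, the product `∏_v (P v)^{m v}`. -/
def monSubst (P : Idx N → PS N) (m : Idx N →₀ ℕ) : PS N :=
  m.prod fun v k => P v ^ k

section AuxPd

lemma coeff_pd (v : Idx N) (F : PS N) (m : Idx N →₀ ℕ) :
    MvPowerSeries.coeff (R := ℂ) m (pd v F)
      = ((m v + 1 : ℕ) : ℂ) * MvPowerSeries.coeff (R := ℂ) (m + Finsupp.single v 1) F := rfl

lemma pd_add (v : Idx N) (F G : PS N) : pd v (F + G) = pd v F + pd v G := by
  ext m
  rw [map_add, coeff_pd, coeff_pd, coeff_pd, map_add, mul_add]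

lemma pd_sum {ι : Type*} (s : Finset ι) (f : ι → PS N) (v : Idx N) :
    pd v (∑ i ∈ s, f i) = ∑ i ∈ s, pd v (f i) := by
  ext m
  rw [coeff_pd, map_sum, map_sum, Finset.mul_sum]
  exact Finset.sum_congr rfl fun i _ => (coeff_pd v (f i) m).symm

lemma pd_comm (u v : Idx N) (F : PS N) : pd u (pd v F) = pd v (pd u F) := by
  ext m
  rw [coeff_pd, coeff_pd, coeff_pd, coeff_pd,
    add_right_comm m (Finsupp.single u 1) (Finsupp.single v 1)]
  rcases eq_or_ne u v with h | h
  · subst h; ring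
  · simp only [Finsupp.add_apply, Finsupp.single_apply, if_neg h, if_neg (Ne.symm h)]
    ring

lemma key_sum (m : Idx N →₀ ℕ) (v : Idx N) (f : (Idx N →₀ ℕ) × (Idx N →₀ ℕ) → ℂ) :
    ∑ pq ∈ Finset.HasAntidiagonal.antidiagonal (m + Finsupp.single v 1), (((pq.1 : Idx N →₀ ℕ) v : ℕ) : ℂ) * f pq
    = ∑ pq ∈ Finset.HasAntidiagonal.antidiagonal m,
        (((pq.1 : Idx N →₀ ℕ) v + 1 : ℕ) : ℂ) * f (pq.1 + Finsupp.single v 1, pq.2) := by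
  classical
  set e := Finsupp.single v 1 with he
  set i : (Idx N →₀ ℕ) × (Idx N →₀ ℕ) → (Idx N →₀ ℕ) × (Idx N →₀ ℕ) :=
    fun pq => (pq.1 + e, pq.2) with hi
  have hinj : ∀ x ∈ Finset.HasAntidiagonal.antidiagonal m, ∀ y ∈ Finset.HasAntidiagonal.antidiagonal m, i x = i y → x = y := by
    intro x _ y _ h
    simp only [hi, Prod.mk.injEq] at h
    exact Prod.ext (add_right_cancel h.1) h.2
  have h1 : ∑ pq ∈ (Finset.HasAntidiagonal.antidiagonal m).image i, (((pq.1 : Idx N →₀ ℕ) v : ℕ) : ℂ) * f pq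
      = ∑ pq ∈ Finset.HasAntidiagonal.antidiagonal m, (((pq.1 : Idx N →₀ ℕ) v + 1 : ℕ) : ℂ) * f (pq.1 + e, pq.2) := by
    rw [Finset.sum_image hinj]
    refine Finset.sum_congr rfl fun pq _ => ?_
    have hv : (pq.1 + e) v = pq.1 v + 1 := by simp [he]
    simp only [hi, hv]
  rw [← h1]
  refine (Finset.sum_subset ?_ ?_).symm
  · intro pq hpq
    rw [Finset.mem_image] at hpq
    obtain ⟨ab, hab, rfl⟩ := hpq
    rw [Finset.HasAntidiagonal.mem_antidiagonal] at hab ⊢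
    simp only [hi]
    rw [add_right_comm, hab]
  · intro pq hpq hnot
    rw [Finset.HasAntidiagonal.mem_antidiagonal] at hpq
    by_cases hz : pq.1 v = 0
    · rw [hz]; simp
    · exfalso
      apply hnot
      rw [Finset.mem_image]
      have hle : e ≤ pq.1 := by
        rw [he, Finsupp.single_le_iff]
        omega
      refine ⟨(pq.1 - e, pq.2), ?_, ?_⟩
      · rw [Finset.HasAntidiagonal.mem_antidiagonal]
        have : pq.1 - e + pq.2 + e = m + e := by
          rw [add_right_comm, tsub_add_cancel_of_le hle, hpq]
        exact add_right_cancel this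
      · simp only [hi]
        rw [tsub_add_cancel_of_le hle]

lemma key_sum2 (m : Idx N →₀ ℕ) (v : Idx N) (f : (Idx N →₀ ℕ) × (Idx N →₀ ℕ) → ℂ) :
    ∑ pq ∈ Finset.HasAntidiagonal.antidiagonal (m + Finsupp.single v 1), (((pq.2 : Idx N →₀ ℕ) v : ℕ) : ℂ) * f pq
    = ∑ pq ∈ Finset.HasAntidiagonal.antidiagonal m,
        (((pq.2 : Idx N →₀ ℕ) v + 1 : ℕ) : ℂ) * f (pq.1, pq.2 + Finsupp.single v 1) := by
  classical
  rw [Finsupp.sum_antidiagonal_swap (m + Finsupp.single v 1)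
    (fun p q => ((q v : ℕ) : ℂ) * f (p, q)),
    key_sum m v (fun pq => f (pq.2, pq.1)),
    Finsupp.sum_antidiagonal_swap m
    (fun p q => ((p v + 1 : ℕ) : ℂ) * f (q, p + Finsupp.single v 1))]

lemma pd_mul (v : Idx N) (F G : PS N) :
    pd v (F * G) = pd v F * G + F * pd v G := by
  ext m
  rw [map_add, coeff_pd, MvPowerSeries.coeff_mul, MvPowerSeries.coeff_mul,
    MvPowerSeries.coeff_mul, Finset.mul_sum]
  have split : ∀ pq ∈ Finset.HasAntidiagonal.antidiagonal (m + Finsupp.single v 1),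
      ((m v + 1 : ℕ) : ℂ) * (MvPowerSeries.coeff (R := ℂ) pq.1 F * MvPowerSeries.coeff (R := ℂ) pq.2 G)
      = (((pq.1 : Idx N →₀ ℕ) v : ℕ) : ℂ) * (MvPowerSeries.coeff (R := ℂ) pq.1 F * MvPowerSeries.coeff (R := ℂ) pq.2 G)
        + (((pq.2 : Idx N →₀ ℕ) v : ℕ) : ℂ) * (MvPowerSeries.coeff (R := ℂ) pq.1 F * MvPowerSeries.coeff (R := ℂ) pq.2 G) := by
    intro pq hpq
    rw [Finset.HasAntidiagonal.mem_antidiagonal] at hpq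
    have hv : pq.1 v + pq.2 v = m v + 1 := by
      have := congrArg (fun f : Idx N →₀ ℕ => f v) hpq
      simpa [Finsupp.add_apply] using this
    rw [← hv]; push_cast; ring
  rw [Finset.sum_congr rfl split, Finset.sum_add_distrib,
    key_sum m v (fun pq => MvPowerSeries.coeff (R := ℂ) pq.1 F * MvPowerSeries.coeff (R := ℂ) pq.2 G),
    key_sum2 m v (fun pq => MvPowerSeries.coeff (R := ℂ) pq.1 F * MvPowerSeries.coeff (R := ℂ) pq.2 G)]
  congr 1
  · refine Finset.sum_congr rfl fun pq _ => ?_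
    rw [coeff_pd]; ring
  · refine Finset.sum_congr rfl fun pq _ => ?_
    rw [coeff_pd]; ring

end AuxPd

/-- The equations (TRR) and (REL) imply the generalized topological recursion
relations for all `a, b, c ≥ 0`. -/
theorem statement14 {N : ℕ} (F : ℕ → Fin N → PS N)
    (hTRR : ∀ (b c : ℕ) (α β γ : Fin N),
        pd (β, b + 1) (pd (γ, c) (F 0 α))
          = ∑ μ, pd (β, b) (F 0 μ) * pd (μ, 0) (pd (γ, c) (F 0 α)))
    (hREL : ∀ (a b : ℕ) (α β : Fin N),
        pd (β, b) (F (a + 1) α) + pd (β, b + 1) (F a α)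
          = ∑ μ, pd (μ, 0) (F a α) * pd (β, b) (F 0 μ)) :
    (∀ (a b c : ℕ) (α β γ : Fin N),
        pd (β, b + 1) (pd (γ, c) (F a α))
          = ∑ μ, pd (β, b) (F 0 μ) * pd (μ, 0) (pd (γ, c) (F a α))) ∧
    (∀ (a b c : ℕ) (α β γ : Fin N),
        pd (β, b) (pd (γ, c) (F (a + 1) α))
          = ∑ μ, pd (μ, 0) (F a α) * pd (β, b) (pd (γ, c) (F 0 μ))) := by
  classical
  have step : ∀ a : ℕ,
      (∀ (b c : ℕ) (α β γ : Fin N),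
          pd (β, b + 1) (pd (γ, c) (F a α))
            = ∑ μ, pd (β, b) (F 0 μ) * pd (μ, 0) (pd (γ, c) (F a α))) →
      (∀ (b c : ℕ) (α β γ : Fin N),
          pd (β, b) (pd (γ, c) (F (a + 1) α))
            = ∑ μ, pd (μ, 0) (F a α) * pd (β, b) (pd (γ, c) (F 0 μ))) := by
    intro a hP b c α β γ
    have hrel := congrArg (pd (γ, c)) (hREL a b α β)
    rw [pd_add, pd_sum] at hrel
    simp only [pd_mul] at hrel
    rw [Finset.sum_add_distrib] at hrel
    have hPa : pd (γ, c) (pd (β, b + 1) (F a α))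
        = ∑ μ, pd (γ, c) (pd (μ, 0) (F a α)) * pd (β, b) (F 0 μ) := by
      rw [pd_comm, hP b c α β γ]
      refine Finset.sum_congr rfl fun μ _ => ?_
      rw [pd_comm]; ring
    rw [hPa] at hrel
    have hX : pd (γ, c) (pd (β, b) (F (a + 1) α))
        = ∑ μ, pd (μ, 0) (F a α) * pd (γ, c) (pd (β, b) (F 0 μ)) := by
      have h2 := hrel
      rw [add_comm (∑ μ, pd (γ, c) (pd (μ, 0) (F a α)) * pd (β, b) (F 0 μ))] at h2
      exact add_right_cancel h2
    rw [pd_comm (β, b) (γ, c), hX]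
    refine Finset.sum_congr rfl fun μ _ => ?_
    rw [pd_comm]
  have main : ∀ a : ℕ,
      (∀ (b c : ℕ) (α β γ : Fin N),
          pd (β, b + 1) (pd (γ, c) (F a α))
            = ∑ μ, pd (β, b) (F 0 μ) * pd (μ, 0) (pd (γ, c) (F a α))) ∧
      (∀ (b c : ℕ) (α β γ : Fin N),
          pd (β, b) (pd (γ, c) (F (a + 1) α))
            = ∑ μ, pd (μ, 0) (F a α) * pd (β, b) (pd (γ, c) (F 0 μ))) := by
    intro a
    induction a with
    | zero => exact ⟨hTRR, step 0 hTRR⟩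
    | succ a ih =>
      have hP1 : ∀ (b c : ℕ) (α β γ : Fin N),
          pd (β, b + 1) (pd (γ, c) (F (a + 1) α))
            = ∑ μ, pd (β, b) (F 0 μ) * pd (μ, 0) (pd (γ, c) (F (a + 1) α)) := by
        intro b c α β γ
        rw [ih.2 (b + 1) c α β γ]
        calc ∑ μ, pd (μ, 0) (F a α) * pd (β, b + 1) (pd (γ, c) (F 0 μ))
            = ∑ μ, pd (μ, 0) (F a α)
                * ∑ ν, pd (β, b) (F 0 ν) * pd (ν, 0) (pd (γ, c) (F 0 μ)) :=
              Finset.sum_congr rfl fun μ _ => by rw [hTRR b c μ β γ]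
          _ = ∑ ν, pd (β, b) (F 0 ν)
                * ∑ μ, pd (μ, 0) (F a α) * pd (ν, 0) (pd (γ, c) (F 0 μ)) := by
              simp_rw [Finset.mul_sum]
              rw [Finset.sum_comm]
              exact Finset.sum_congr rfl fun ν _ =>
                Finset.sum_congr rfl fun μ _ => by ring
          _ = ∑ ν, pd (β, b) (F 0 ν) * pd (ν, 0) (pd (γ, c) (F (a + 1) α)) :=
              Finset.sum_congr rfl fun ν _ => by rw [ih.2 0 c α ν γ]
      exact ⟨hP1, step (a + 1) hP1⟩
  exact ⟨fun a => (main a).1, fun a => (main a).2⟩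

end
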